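/- For every integer N ≥ 2 and every complete code (ℓ_1, …, ℓ_N) on N symbols, the maximum codeword length satisfies ℓ_n ≤ N − 1 for every n ∈ {1, …, N}. -/

import Mathlib

lemma kraft_aux : ∀ (n : ℕ) (s : Multiset ℕ), s.card = n → (∀ x ∈ s, 0 < x) →
    (s.map fun k => ((2 : ℚ) ^ k)⁻¹).sum = 1 → ∀ x ∈ s, x ≤ s.card - 1 := by
  intro n
  induction n using Nat.strong_induction_on with
  | _ n IH =>
    intro s hcard hpos hsum x hx
    -- s is nonempty
    have hne : s ≠ 0 := by rintro rfl; simp at hx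
    have hnet : s.toFinset.Nonempty := by
      exact ⟨x, Multiset.mem_toFinset.mpr hx⟩
    obtain ⟨L, hLmem, hle⟩ : ∃ L, L ∈ s ∧ ∀ y ∈ s, y ≤ L :=
      ⟨s.toFinset.max' hnet, Multiset.mem_toFinset.mp (s.toFinset.max'_mem hnet),
        fun y hy => s.toFinset.le_max' y (Multiset.mem_toFinset.mpr hy)⟩
    have hxL : x ≤ L := hle x hx
    have hLpos : 0 < L := hpos L hLmem
    rcases eq_or_lt_of_le (show 1 ≤ L from hLpos) with h1 | h2
    · -- L = 1 : all elements equal 1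
      have hall : ∀ y ∈ s, y = 1 := by
        intro y hy
        have := hle y hy
        have := hpos y hy
        omega
      have hrep : s.map (fun k => ((2 : ℚ) ^ k)⁻¹) = Multiset.replicate s.card (2⁻¹ : ℚ) := by
        apply Multiset.eq_replicate.mpr
        constructor
        · simp
        · intro b hb
          obtain ⟨y, hy, rfl⟩ := Multiset.mem_map.mp hb
          rw [hall y hy]; norm_num
      rw [hrep, Multiset.sum_replicate] at hsum
      have : (s.card : ℚ) * 2⁻¹ = 1 := by
        simpa [nsmul_eq_mul] using hsum
      have hc2 : (s.card : ℚ) = 2 := by linarith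
      have : s.card = 2 := by exact_mod_cast hc2
      omega
    · -- L ≥ 2
      -- integer sum identity
      have key : ∀ (t : Multiset ℕ), (∀ y ∈ t, y ≤ L) →
          (((t.map fun k => 2 ^ (L - k)).sum : ℕ) : ℚ)
            = 2 ^ L * (t.map fun k => ((2 : ℚ) ^ k)⁻¹).sum := by
        intro t ht
        rw [Nat.cast_multiset_sum, Multiset.map_map, ← Multiset.sum_map_mul_left]
        apply congrArg
        apply Multiset.map_congr rfl
        intro y hy
        have hyL := ht y hy
        have : (2 : ℚ) ^ (L - y) * 2 ^ y = 2 ^ L := by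
          rw [← pow_add, Nat.sub_add_cancel hyL]
        push_cast
        field_simp
        simp only [Function.comp_apply, Nat.cast_pow, Nat.cast_ofNat]
        linarith [this]
      -- get second copy of L
      obtain ⟨s', rfl⟩ := Multiset.exists_cons_of_mem hLmem
      have hLs' : L ∈ s' := by
        by_contra hcon
        have hlt : ∀ y ∈ s', y < L := by
          intro y hy
          have := hle y (Multiset.mem_cons_of_mem hy)
          rcases eq_or_lt_of_le this with h | h
          · exact absurd (h ▸ hy) hcon
          · exact h
        have hA : (((((L ::ₘ s').map fun k => 2 ^ (L - k)).sum : ℕ)) : ℚ) = 2 ^ L := by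
          rw [key _ hle, hsum, mul_one]
        have hA' : ((L ::ₘ s').map fun k => 2 ^ (L - k)).sum = 2 ^ L := by
          exact_mod_cast hA
        rw [Multiset.map_cons, Multiset.sum_cons, Nat.sub_self, pow_zero] at hA'
        have hdvd : 2 ∣ (s'.map fun k => 2 ^ (L - k)).sum := by
          apply Multiset.dvd_sum
          intro z hz
          obtain ⟨y, hy, rfl⟩ := Multiset.mem_map.mp hz
          have hy0 : L - y ≠ 0 := by have := hlt y hy; omega
          exact dvd_pow_self 2 hy0
        have heven : 2 ∣ 2 ^ L := dvd_pow_self 2 (by omega)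
        omega
      obtain ⟨t, rfl⟩ := Multiset.exists_cons_of_mem hLs'
      -- new multiset
      set u : Multiset ℕ := (L - 1) ::ₘ t with hu
      have hcardu : u.card = n - 1 := by
        simp [hu] at hcard ⊢; omega
      have hposu : ∀ y ∈ u, 0 < y := by
        intro y hy
        rcases Multiset.mem_cons.mp hy with h | h
        · omega
        · exact hpos y (Multiset.mem_cons_of_mem (Multiset.mem_cons_of_mem h))
      have hsumu : (u.map fun k => ((2 : ℚ) ^ k)⁻¹).sum = 1 := by
        rw [hu, Multiset.map_cons, Multiset.sum_cons]
        rw [Multiset.map_cons, Multiset.sum_cons, Multiset.map_cons, Multiset.sum_cons] at hsum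
        have hL1 : ((2 : ℚ) ^ (L - 1))⁻¹ = ((2:ℚ) ^ L)⁻¹ + ((2:ℚ)^L)⁻¹ := by
          have : (2 : ℚ) ^ L = 2 * 2 ^ (L - 1) := by
            rw [← pow_succ']
            congr 1
            omega
          rw [this]
          rw [mul_inv]
          ring
        rw [hL1]
        linarith [hsum]
      have hn2 : 2 ≤ n := by
        simp at hcard; omega
      have hres := IH (n - 1) (by omega) u hcardu hposu hsumu (L - 1) (Multiset.mem_cons_self _ _)
      rw [hcardu] at hres
      have hcards : (L ::ₘ L ::ₘ t).card = n := hcard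
      simp at hcards
      omega

/-- **Theorem 1 of the paper.** For every integer `N ≥ 2` and every complete code
`(ℓ 1, …, ℓ N)` on `N` symbols (positive codeword lengths satisfying Kraft's
inequality with equality), every codeword length is at most `N - 1`. -/
theorem complete_code_max_length_le (N : ℕ) (hN : 2 ≤ N) (ℓ : Fin N → ℕ)
    (hpos : ∀ n, 0 < ℓ n)
    (hkraft : ∑ n, ((2 : ℚ) ^ ℓ n)⁻¹ = 1) :
    ∀ n, ℓ n ≤ N - 1 := by
  intro n
  have hcard : (Finset.univ.val.map ℓ).card = N := by simp
  have hpos' : ∀ x ∈ Finset.univ.val.map ℓ, 0 < x := by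
    intro x hx
    obtain ⟨m, _, rfl⟩ := Multiset.mem_map.mp hx
    exact hpos m
  have hsum : ((Finset.univ.val.map ℓ).map fun k => ((2 : ℚ) ^ k)⁻¹).sum = 1 := by
    rw [Multiset.map_map]
    exact hkraft
  have := kraft_aux N _ hcard hpos' hsum (ℓ n) (Multiset.mem_map.mpr ⟨n, Finset.mem_univ_val _, rfl⟩)
  rwa [hcard] at this
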